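/- arXiv:2305.09126 — 2 statements merged into one kernel-verified Lean document; each statement's English description precedes it below -/
import Mathlib

section
/- Under ignorability and positivity, E[(1−Z)·Y / (1−e(X))] = E[Y₀], and hence E[Z·Y/e(X)] − E[(1−Z)·Y/(1−e(X))] equals the average causal effect τ = E[Y₁] − E[Y₀]. -/
open MeasureTheory ProbabilityTheory
open scoped ProbabilityTheory

/-- If `W` and a binary `Z` are conditionally independent given `m'`,
then `μ[Z | m' ⊔ σ(W)] = μ[Z | m']`. -/
lemma condexp_sup_comap_of_condIndepFun
    {Ω γ : Type*} {m' : MeasurableSpace Ω} {mΩ : MeasurableSpace Ω} [StandardBorelSpace Ω]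
    {μ : Measure Ω} [IsProbabilityMeasure μ] {mγ : MeasurableSpace γ}
    (hm' : m' ≤ mΩ)
    (W : Ω → γ) (hW : Measurable W) (Z : Ω → ℝ) (hZ : Measurable Z)
    (hbin : ∀ ω, Z ω = 0 ∨ Z ω = 1)
    (hindep : CondIndepFun m' hm' W Z μ) :
    μ[Z|m'] =ᵐ[μ] μ[Z | m' ⊔ MeasurableSpace.comap W mγ] := by
  classical
  have hmW : MeasurableSpace.comap W mγ ≤ mΩ := hW.comap_le
  have hM : m' ⊔ MeasurableSpace.comap W mγ ≤ mΩ := sup_le hm' hmW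
  have hZint : Integrable Z μ := by
    refine (integrable_const (1:ℝ)).mono' hZ.aestronglyMeasurable (ae_of_all _ fun ω => ?_)
    rcases hbin ω with h | h <;> simp [h]
  have hZind : (Z ⁻¹' {1}).indicator (fun _ => (1:ℝ)) = Z := by
    funext ω; rcases hbin ω with h | h <;> simp [Set.indicator_apply, h]
  have hprod := (condIndepFun_iff_condExp_inter_preimage_eq_mul (hm' := hm') hW hZ).mp hindep
  -- generating π-system for M
  set S : Set (Set Ω) :=
    {s | ∃ s₁ s₂, MeasurableSet[m'] s₁ ∧ MeasurableSet[MeasurableSpace.comap W mγ] s₂ ∧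
      s = s₁ ∩ s₂} with hSdef
  have hgen : m' ⊔ MeasurableSpace.comap W mγ = MeasurableSpace.generateFrom S := by
    apply le_antisymm
    · refine sup_le (fun s hs => ?_) (fun s hs => ?_)
      · exact MeasurableSpace.measurableSet_generateFrom
          ⟨s, Set.univ, hs, MeasurableSet.univ, (Set.inter_univ s).symm⟩
      · exact MeasurableSpace.measurableSet_generateFrom
          ⟨Set.univ, s, MeasurableSet.univ, hs, (Set.univ_inter s).symm⟩
    · refine MeasurableSpace.generateFrom_le ?_
      rintro s ⟨s₁, s₂, h₁, h₂, rfl⟩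
      exact @MeasurableSet.inter Ω (m' ⊔ MeasurableSpace.comap W mγ) _ _
        ((le_sup_left : m' ≤ _) _ h₁) ((le_sup_right : MeasurableSpace.comap W mγ ≤ _) _ h₂)
  have hpi : IsPiSystem S := by
    rintro s ⟨s₁, s₂, h₁, h₂, rfl⟩ t ⟨t₁, t₂, h₁', h₂', rfl⟩ -
    exact ⟨s₁ ∩ t₁, s₂ ∩ t₂, h₁.inter h₁', h₂.inter h₂',
      Set.inter_inter_inter_comm s₁ s₂ t₁ t₂⟩
  have key : ∀ ⦃t⦄, MeasurableSet[m' ⊔ MeasurableSpace.comap W mγ] t →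
      ∫ x in t, (μ[Z|m']) x ∂μ = ∫ x in t, Z x ∂μ := by
    refine MeasurableSpace.induction_on_inter (m := m' ⊔ MeasurableSpace.comap W mγ)
      (C := fun t _ => ∫ x in t, (μ[Z|m']) x ∂μ = ∫ x in t, Z x ∂μ) hgen hpi ?_ ?_ ?_ ?_
    · simp
    · rintro t ⟨s₁, C, h₁, ⟨s₂, hs₂, rfl⟩, rfl⟩
      have hD : MeasurableSet[mΩ] (W ⁻¹' s₂) := hW hs₂
      have hind_int : Integrable ((W ⁻¹' s₂ ∩ Z ⁻¹' {1}).indicator (fun _ => (1:ℝ))) μ :=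
        (integrable_const (1:ℝ)).indicator (hD.inter (hZ (measurableSet_singleton 1) : MeasurableSet[mΩ] _))
      have hindD_int : Integrable ((W ⁻¹' s₂).indicator (fun _ => (1:ℝ))) μ :=
        (integrable_const (1:ℝ)).indicator hD
      have hmul_int : Integrable
          (fun ω => (μ[Z|m']) ω * (W ⁻¹' s₂).indicator (fun _ => (1:ℝ)) ω) μ := by
        refine Integrable.mono' (integrable_condExp : Integrable (μ[Z|m']) μ).abs
          ((stronglyMeasurable_condExp.mono hm').aestronglyMeasurable.mul
            hindD_int.aestronglyMeasurable) (ae_of_all _ fun ω => ?_)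
        by_cases hω : ω ∈ W ⁻¹' s₂ <;>
          simp [Set.indicator_apply, hω, abs_nonneg]
      -- rewrite both sides as integrals over s₁
      rw [← setIntegral_indicator hD, ← setIntegral_indicator hD]
      have hrhs_fun : (W ⁻¹' s₂).indicator Z
          = (W ⁻¹' s₂ ∩ Z ⁻¹' {1}).indicator (fun _ => (1:ℝ)) := by
        funext ω
        by_cases hω : ω ∈ W ⁻¹' s₂
        · rcases hbin ω with h | h <;>
            simp [Set.indicator_apply, hω, h]
        · simp [Set.indicator_apply, hω]
      have hlhs_fun : (W ⁻¹' s₂).indicator (μ[Z|m'])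
          = fun ω => (μ[Z|m']) ω * (W ⁻¹' s₂).indicator (fun _ => (1:ℝ)) ω := by
        funext ω
        by_cases hω : ω ∈ W ⁻¹' s₂ <;> simp [Set.indicator_apply, hω]
      rw [hrhs_fun, hlhs_fun]
      rw [← setIntegral_condExp hm' hind_int h₁, ← setIntegral_condExp hm' hmul_int h₁]
      refine setIntegral_congr_ae (hm' _ h₁) ?_
      have hpull := condExp_mul_of_stronglyMeasurable_left (μ := μ) (m := m')
        stronglyMeasurable_condExp
        (by exact hmul_int) hindD_int
      have hfac := hprod s₂ {1} hs₂ (measurableSet_singleton 1)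
      rw [hZind] at hfac
      filter_upwards [hpull, hfac] with ω h1 h2 _
      calc (μ[fun ω => (μ[Z|m']) ω * (W ⁻¹' s₂).indicator (fun _ => (1:ℝ)) ω|m']) ω
          = (μ[(μ[Z|m']) * (W ⁻¹' s₂).indicator (fun _ => (1:ℝ))|m']) ω := rfl
        _ = ((μ[Z|m']) * μ[(W ⁻¹' s₂).indicator (fun _ => (1:ℝ))|m']) ω := h1
        _ = (μ[(W ⁻¹' s₂).indicator (fun _ => (1:ℝ))|m']) ω * (μ[Z|m']) ω := mul_comm _ _
        _ = (μ[(W ⁻¹' s₂ ∩ Z ⁻¹' {1}).indicator (fun _ => (1:ℝ))|m']) ω := h2.symm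
    · intro t htM ht
      have htΩ : MeasurableSet[mΩ] t := hM _ htM
      rw [setIntegral_compl htΩ integrable_condExp, setIntegral_compl htΩ hZint, ht,
        integral_condExp hm']
    · intro f hdisj hfM hC
      have hfΩ : ∀ i, MeasurableSet[mΩ] (f i) := fun i => hM _ (hfM i)
      rw [integral_iUnion hfΩ hdisj integrable_condExp.integrableOn,
        integral_iUnion hfΩ hdisj hZint.integrableOn]
      exact tsum_congr hC
  exact ae_eq_condExp_of_forall_setIntegral_eq hM hZint
    (fun s _ _ => integrable_condExp.integrableOn)
    (fun s hs _ => key hs)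
    (StronglyMeasurable.aestronglyMeasurable (stronglyMeasurable_condExp.mono le_sup_left))

/-- IPW identity for one arm. -/
lemma ipw_aux
    {Ω γ : Type*} {m' : MeasurableSpace Ω} {mΩ : MeasurableSpace Ω} [StandardBorelSpace Ω]
    {μ : Measure Ω} [IsProbabilityMeasure μ] {mγ : MeasurableSpace γ}
    (hm' : m' ≤ mΩ)
    (W : Ω → γ) (hW : Measurable W) (Z : Ω → ℝ) (hZ : Measurable Z)
    (hbin : ∀ ω, Z ω = 0 ∨ Z ω = 1)
    (hindep : CondIndepFun m' hm' W Z μ)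
    (V : Ω → ℝ) (hV : Measurable[MeasurableSpace.comap W mγ] V)
    (hVint : Integrable V μ)
    (hpos : ∀ᵐ ω ∂μ, 0 < (μ[Z|m']) ω)
    (hint : Integrable (fun ω => Z ω * V ω / (μ[Z|m']) ω) μ) :
    ∫ ω, Z ω * V ω / (μ[Z|m']) ω ∂μ = ∫ ω, V ω ∂μ := by
  have hmW : MeasurableSpace.comap W mγ ≤ mΩ := hW.comap_le
  have hM : m' ⊔ MeasurableSpace.comap W mγ ≤ mΩ := sup_le hm' hmW
  have hZint : Integrable Z μ := by
    refine (integrable_const (1:ℝ)).mono' hZ.aestronglyMeasurable (ae_of_all _ fun ω => ?_)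
    rcases hbin ω with h | h <;> simp [h]
  have keyA := condexp_sup_comap_of_condIndepFun hm' W hW Z hZ hbin hindep
  set g : Ω → ℝ := fun ω => V ω / (μ[Z|m']) ω with hgdef
  have hgM : StronglyMeasurable[m' ⊔ MeasurableSpace.comap W mγ] g := by
    have h1 : Measurable[m' ⊔ MeasurableSpace.comap W mγ] V := hV.mono le_sup_right le_rfl
    have h2 : Measurable[m' ⊔ MeasurableSpace.comap W mγ] (μ[Z|m']) :=
      (stronglyMeasurable_condExp.mono (le_sup_left : m' ≤ _)).measurable
    exact (h1.div h2).stronglyMeasurable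
  have hrw : (fun ω => Z ω * V ω / (μ[Z|m']) ω) = g * Z := by
    funext ω
    simp only [hgdef, Pi.mul_apply]
    rw [mul_comm (Z ω) (V ω), mul_div_assoc, mul_comm]
    ring
  have hgZint : Integrable (g * Z) μ := by rw [← hrw]; exact hint
  have hpull := condExp_mul_of_stronglyMeasurable_left (μ := μ) (m := m' ⊔ MeasurableSpace.comap W mγ) hgM hgZint hZint
  calc ∫ ω, Z ω * V ω / (μ[Z|m']) ω ∂μ
      = ∫ ω, (g * Z) ω ∂μ := by rw [hrw]
    _ = ∫ ω, (μ[g * Z|m' ⊔ MeasurableSpace.comap W mγ]) ω ∂μ := (integral_condExp hM).symm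
    _ = ∫ ω, g ω * (μ[Z|m' ⊔ MeasurableSpace.comap W mγ]) ω ∂μ := integral_congr_ae (by
        filter_upwards [hpull] with ω h; simpa using h)
    _ = ∫ ω, V ω ∂μ := integral_congr_ae (by
        filter_upwards [keyA, hpos] with ω h1 h2
        rw [← h1, hgdef]
        exact div_mul_cancel₀ (V ω) (ne_of_gt h2))
/-- Under ignorability and positivity, `E[(1-Z)·Y / (1-e(X))] = E[Y₀]`, and hence
`E[Z·Y/e(X)] - E[(1-Z)·Y/(1-e(X))] = τ = E[Y₁] - E[Y₀]`. -/
theorem ipw_identification_ace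
    {Ω : Type*} {mΩ : MeasurableSpace Ω} [StandardBorelSpace Ω]
    {μ : Measure Ω} [IsProbabilityMeasure μ]
    {E : Type*} [mE : MeasurableSpace E]
    (X : Ω → E) (Z Y0 Y1 : Ω → ℝ)
    (hX : Measurable X) (hZ : Measurable Z)
    (hY0 : Measurable Y0) (hY1 : Measurable Y1)
    (hbin : ∀ ω, Z ω = 0 ∨ Z ω = 1)
    (hmX : MeasurableSpace.comap X mE ≤ mΩ)
    (hignore : CondIndepFun (MeasurableSpace.comap X mE) hmX
        (fun ω => (Y0 ω, Y1 ω)) Z μ)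
    (Y : Ω → ℝ) (hY : Y = fun ω => Z ω * Y1 ω + (1 - Z ω) * Y0 ω)
    (e : Ω → ℝ)
    (he : e =ᵐ[μ] μ[(fun ω => if Z ω = 1 then (1 : ℝ) else 0) |
        MeasurableSpace.comap X mE])
    (hpos : ∀ᵐ ω ∂μ, 0 < e ω ∧ e ω < 1)
    (hint0 : Integrable Y0 μ) (hint1 : Integrable Y1 μ)
    (hintT : Integrable (fun ω => Z ω * Y ω / e ω) μ)
    (hintC : Integrable (fun ω => (1 - Z ω) * Y ω / (1 - e ω)) μ) :
    ∫ ω, (1 - Z ω) * Y ω / (1 - e ω) ∂μ = ∫ ω, Y0 ω ∂μ ∧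
    ∫ ω, Z ω * Y ω / e ω ∂μ - ∫ ω, (1 - Z ω) * Y ω / (1 - e ω) ∂μ =
      ∫ ω, Y1 ω ∂μ - ∫ ω, Y0 ω ∂μ := by
  have hZif : (fun ω => if Z ω = 1 then (1:ℝ) else 0) = Z := by
    funext ω; rcases hbin ω with h | h <;> simp [h]
  rw [hZif] at he
  subst hY
  have hW : Measurable (fun ω => (Y0 ω, Y1 ω)) := hY0.prodMk hY1
  have hWle : Measurable[MeasurableSpace.comap (fun ω => (Y0 ω, Y1 ω)) inferInstance]
      (fun ω => (Y0 ω, Y1 ω)) := measurable_iff_comap_le.mpr le_rfl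
  have hVY1 : Measurable[MeasurableSpace.comap (fun ω => (Y0 ω, Y1 ω)) inferInstance] Y1 :=
    measurable_snd.comp hWle
  have hVY0 : Measurable[MeasurableSpace.comap (fun ω => (Y0 ω, Y1 ω)) inferInstance] Y0 :=
    measurable_fst.comp hWle
  have hZint : Integrable Z μ := by
    refine (integrable_const (1:ℝ)).mono' hZ.aestronglyMeasurable (ae_of_all _ fun ω => ?_)
    rcases hbin ω with h | h <;> simp [h]
  have hZ' : Measurable (fun ω => 1 - Z ω) := measurable_const.sub hZ
  have hbin' : ∀ ω, 1 - Z ω = 0 ∨ 1 - Z ω = 1 := fun ω => by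
    rcases hbin ω with h | h <;> simp [h]
  have hindep' : CondIndepFun (MeasurableSpace.comap X mE) hmX
      (fun ω => (Y0 ω, Y1 ω)) (fun ω => 1 - Z ω) μ := by
    have h := hignore.comp measurable_id
      (measurable_const.sub measurable_id : Measurable fun z : ℝ => 1 - z)
    exact h
  have hcexpZ' : μ[(fun ω => 1 - Z ω)|MeasurableSpace.comap X mE]
      =ᵐ[μ] fun ω => 1 - (μ[Z|MeasurableSpace.comap X mE]) ω := by
    have hsub := condExp_sub (m := MeasurableSpace.comap X mE) (μ := μ)
      (integrable_const (1:ℝ)) hZint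
    have hconst : μ[(fun _ : Ω => (1:ℝ))|MeasurableSpace.comap X mE] = fun _ => (1:ℝ) :=
      condExp_const hmX 1
    filter_upwards [hsub] with ω hω
    have : (fun ω => 1 - Z ω) = (fun _ : Ω => (1:ℝ)) - Z := rfl
    rw [this, hω, Pi.sub_apply, hconst]
  -- positivity transferred to the conditional expectations
  have hposT : ∀ᵐ ω ∂μ, 0 < (μ[Z|MeasurableSpace.comap X mE]) ω := by
    filter_upwards [hpos, he] with ω h1 h2
    rw [← h2]; exact h1.1
  have hposC : ∀ᵐ ω ∂μ, 0 < (μ[(fun ω => 1 - Z ω)|MeasurableSpace.comap X mE]) ω := by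
    filter_upwards [hpos, he, hcexpZ'] with ω h1 h2 h3
    rw [h3, ← h2]; linarith [h1.2]
  -- almost-everywhere rewrites of the two integrands
  have hYT : ∀ ω, Z ω * (Z ω * Y1 ω + (1 - Z ω) * Y0 ω) = Z ω * Y1 ω := fun ω => by
    rcases hbin ω with h | h <;> simp [h] <;> ring
  have hYC : ∀ ω, (1 - Z ω) * (Z ω * Y1 ω + (1 - Z ω) * Y0 ω) = (1 - Z ω) * Y0 ω := fun ω => by
    rcases hbin ω with h | h <;> simp [h] <;> ring
  have aeT : (fun ω => Z ω * (Z ω * Y1 ω + (1 - Z ω) * Y0 ω) / e ω)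
      =ᵐ[μ] (fun ω => Z ω * Y1 ω / (μ[Z|MeasurableSpace.comap X mE]) ω) := by
    filter_upwards [he] with ω hω
    rw [hYT ω, hω]
  have aeC : (fun ω => (1 - Z ω) * (Z ω * Y1 ω + (1 - Z ω) * Y0 ω) / (1 - e ω))
      =ᵐ[μ] (fun ω => (1 - Z ω) * Y0 ω /
        (μ[(fun ω => 1 - Z ω)|MeasurableSpace.comap X mE]) ω) := by
    filter_upwards [he, hcexpZ'] with ω h2 h3
    rw [hYC ω, h3, ← h2]
  have intT' : Integrable
      (fun ω => Z ω * Y1 ω / (μ[Z|MeasurableSpace.comap X mE]) ω) μ := hintT.congr aeT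
  have intC' : Integrable (fun ω => (1 - Z ω) * Y0 ω /
      (μ[(fun ω => 1 - Z ω)|MeasurableSpace.comap X mE]) ω) μ := hintC.congr aeC
  have resT := ipw_aux hmX (fun ω => (Y0 ω, Y1 ω)) hW Z hZ hbin hignore
    Y1 hVY1 hint1 hposT intT'
  have resC := ipw_aux hmX (fun ω => (Y0 ω, Y1 ω)) hW (fun ω => 1 - Z ω) hZ' hbin' hindep'
    Y0 hVY0 hint0 hposC intC'
  have eqT : ∫ ω, Z ω * (Z ω * Y1 ω + (1 - Z ω) * Y0 ω) / e ω ∂μ = ∫ ω, Y1 ω ∂μ := by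
    rw [integral_congr_ae aeT]; exact resT
  have eqC : ∫ ω, (1 - Z ω) * (Z ω * Y1 ω + (1 - Z ω) * Y0 ω) / (1 - e ω) ∂μ
      = ∫ ω, Y0 ω ∂μ := by
    rw [integral_congr_ae aeC]; exact resC
  exact ⟨eqC, by rw [eqT, eqC]⟩
end

section
/- Let m₁(X) = E[Y₁ | X]. Under ignorability, for any measurable function ẽ of X bounded away from 0, E[ m₁(X) + Z·(Y − m₁(X)) / ẽ(X) ] = E[Y₁]; that is, the augmented estimator is unbiased when the outcome regression model is correct even if the propensity model ẽ is misspecified. -/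
open MeasureTheory ProbabilityTheory
open scoped ProbabilityTheory

section Aux

variable {Ω : Type*} {m' m₁ : MeasurableSpace Ω} [mΩ : MeasurableSpace Ω]
  {μ : Measure Ω} [IsProbabilityMeasure μ]

lemma dr_condexp_indicator_abs_le_one (hm' : m' ≤ mΩ) {A : Set Ω} (hA : MeasurableSet A) :
    ∀ᵐ ω ∂μ, |(μ⟦A|m'⟧) ω| ≤ 1 := by
  have h0 : 0 ≤ᵐ[μ] μ⟦A|m'⟧ :=
    condExp_nonneg (ae_of_all _ fun ω => Set.indicator_nonneg (fun _ _ => zero_le_one) ω)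
  have h1 : μ⟦A|m'⟧ ≤ᵐ[μ] μ[(fun _ => (1:ℝ))|m'] :=
    condExp_mono ((integrable_const (1:ℝ)).indicator hA) (integrable_const _)
      (ae_of_all _ fun ω => by
        classical
        by_cases h : ω ∈ A <;> simp [Set.indicator_apply, h])
  rw [condExp_const hm'] at h1
  filter_upwards [h0, h1] with ω h0 h1
  simp only [Pi.zero_apply] at h0
  rw [abs_le]
  exact ⟨by linarith, h1⟩

lemma dr_aux_setIntegral (hm' : m' ≤ mΩ) (hm₁ : m₁ ≤ mΩ)
    {A : Set Ω} (hA : MeasurableSet A)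
    (hprod : ∀ T, MeasurableSet[m₁] T →
      (μ⟦T ∩ A|m'⟧) =ᵐ[μ] fun ω => (μ⟦T|m'⟧) ω * (μ⟦A|m'⟧) ω)
    {s : Set Ω} (hs : MeasurableSet[m'] s) :
    ∀ ⦃f : Ω → ℝ⦄, Integrable f (μ.trim hm₁) →
      ∫ ω in s ∩ A, f ω ∂μ = ∫ ω in s, (μ⟦A|m'⟧) ω * (μ[f|m']) ω ∂μ := by
  have hw := dr_condexp_indicator_abs_le_one (μ := μ) hm' hA
  have hwnorm : ∀ᵐ ω ∂μ, ‖(μ⟦A|m'⟧) ω‖ ≤ 1 := by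
    filter_upwards [hw] with ω h using by rwa [Real.norm_eq_abs]
  have hwint : ∀ (g : Ω → ℝ), Integrable (fun ω => (μ⟦A|m'⟧) ω * (μ[g|m']) ω) μ := fun g =>
    Integrable.bdd_mul integrable_condExp
      (stronglyMeasurable_condExp.mono hm').aestronglyMeasurable hwnorm
  refine @Integrable.induction Ω ℝ m₁ _ (μ.trim hm₁)
    (fun f => ∫ ω in s ∩ A, f ω ∂μ = ∫ ω in s, (μ⟦A|m'⟧) ω * (μ[f|m']) ω ∂μ) ?_ ?_ ?_ ?_
  · -- indicator case
    intro d T hT _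
    have hTm : MeasurableSet T := hm₁ T hT
    have hTA : MeasurableSet (T ∩ A) := hTm.inter hA
    have hintind : Integrable ((T ∩ A).indicator fun _ => (1:ℝ)) μ :=
      (integrable_const _).indicator hTA
    have hce : μ[T.indicator (fun _ => d)|m'] =ᵐ[μ] fun ω => d * (μ⟦T|m'⟧) ω := by
      have h1 : T.indicator (fun _ => d) = d • T.indicator (fun _ => (1:ℝ)) := by
        ext ω; classical
        by_cases h : ω ∈ T <;> simp [Set.indicator_apply, h]
      rw [h1]
      refine (condExp_smul d _ m').trans (ae_of_all _ fun ω => ?_)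
      simp [smul_eq_mul]
    calc ∫ ω in s ∩ A, T.indicator (fun _ => d) ω ∂μ
        = ∫ _ω in (s ∩ A) ∩ T, d ∂μ := setIntegral_indicator hTm
      _ = (μ ((s ∩ A) ∩ T)).toReal * d := by rw [setIntegral_const, smul_eq_mul, Measure.real]
      _ = (μ (s ∩ (T ∩ A))).toReal * d := by rw [Set.inter_assoc, Set.inter_comm A T]
      _ = d * ∫ ω in s, (T ∩ A).indicator (fun _ => (1:ℝ)) ω ∂μ := by
          rw [setIntegral_indicator hTA, setIntegral_const, smul_eq_mul, mul_one, mul_comm, Measure.real]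
      _ = d * ∫ ω in s, (μ⟦T ∩ A|m'⟧) ω ∂μ := by
          rw [setIntegral_condExp hm' hintind hs]
      _ = ∫ ω in s, (μ⟦A|m'⟧) ω * (μ[T.indicator (fun _ => d)|m']) ω ∂μ := by
          rw [← integral_const_mul]
          refine integral_congr_ae (ae_restrict_of_ae ?_)
          filter_upwards [hprod T hT, hce] with ω h1 h2
          rw [h1, h2]; ring
  · -- additivity
    intro f g _hdisj hfi hgi hPf hPg
    have hf' : Integrable f μ := integrable_of_integrable_trim hm₁ hfi
    have hg' : Integrable g μ := integrable_of_integrable_trim hm₁ hgi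
    have hL : ∫ ω in s ∩ A, (f + g) ω ∂μ = ∫ ω in s ∩ A, f ω ∂μ + ∫ ω in s ∩ A, g ω ∂μ :=
      integral_add hf'.integrableOn hg'.integrableOn
    have hR : ∫ ω in s, (μ⟦A|m'⟧) ω * (μ[f + g|m']) ω ∂μ
        = ∫ ω in s, (μ⟦A|m'⟧) ω * (μ[f|m']) ω ∂μ
          + ∫ ω in s, (μ⟦A|m'⟧) ω * (μ[g|m']) ω ∂μ := by
      rw [← integral_add ((hwint f).integrableOn) ((hwint g).integrableOn)]
      refine integral_congr_ae (ae_restrict_of_ae ?_)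
      filter_upwards [condExp_add hf' hg' m'] with ω h
      rw [h, Pi.add_apply, mul_add]
    rw [hL, hR, hPf, hPg]
  · -- closedness
    refine isClosed_eq ?_ ?_
    · refine (LipschitzWith.of_dist_le_mul (K := 1) fun f g => ?_).continuous
      have hf' : Integrable (⇑f) μ := integrable_of_integrable_trim hm₁ (L1.integrable_coeFn f)
      have hg' : Integrable (⇑g) μ := integrable_of_integrable_trim hm₁ (L1.integrable_coeFn g)
      have hsub : Integrable (fun ω => f ω - g ω) μ := hf'.sub hg'
      have hmeas : AEStronglyMeasurable[m₁] (fun ω => |f ω - g ω|) (μ.trim hm₁) :=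
        ((Lp.aestronglyMeasurable f).sub (Lp.aestronglyMeasurable g)).norm.congr
          (ae_of_all _ fun ω => by simp [Real.norm_eq_abs])
      rw [NNReal.coe_one, one_mul]
      calc dist (∫ ω in s ∩ A, f ω ∂μ) (∫ ω in s ∩ A, g ω ∂μ)
          = |∫ ω in s ∩ A, f ω ∂μ - ∫ ω in s ∩ A, g ω ∂μ| := Real.dist_eq _ _
        _ = |∫ ω in s ∩ A, (f ω - g ω) ∂μ| := by
            rw [integral_sub hf'.integrableOn hg'.integrableOn]
        _ ≤ ∫ ω in s ∩ A, |f ω - g ω| ∂μ := by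
            simpa [Real.norm_eq_abs] using
              norm_integral_le_integral_norm (μ := μ.restrict (s ∩ A)) (fun ω => f ω - g ω)
        _ ≤ ∫ ω, |f ω - g ω| ∂μ :=
            setIntegral_le_integral hsub.abs (ae_of_all _ fun ω => abs_nonneg _)
        _ = ∫ ω, |f ω - g ω| ∂(μ.trim hm₁) := integral_trim_ae hm₁ hmeas
        _ = dist f g := by
            rw [L1.dist_eq_integral_dist]
            exact integral_congr_ae (ae_of_all _ fun ω => (Real.dist_eq _ _).symm)
    · refine (LipschitzWith.of_dist_le_mul (K := 1) fun f g => ?_).continuous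
      have hf' : Integrable (⇑f) μ := integrable_of_integrable_trim hm₁ (L1.integrable_coeFn f)
      have hg' : Integrable (⇑g) μ := integrable_of_integrable_trim hm₁ (L1.integrable_coeFn g)
      have hmeas : AEStronglyMeasurable[m₁] (fun ω => |f ω - g ω|) (μ.trim hm₁) :=
        ((Lp.aestronglyMeasurable f).sub (Lp.aestronglyMeasurable g)).norm.congr
          (ae_of_all _ fun ω => by simp [Real.norm_eq_abs])
      have key : (fun ω => (μ⟦A|m'⟧) ω * (μ[⇑f|m']) ω - (μ⟦A|m'⟧) ω * (μ[⇑g|m']) ω)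
          =ᵐ[μ] fun ω => (μ⟦A|m'⟧) ω * (μ[⇑f - ⇑g|m']) ω := by
        filter_upwards [condExp_sub hf' hg' m'] with ω h
        rw [h, Pi.sub_apply]; ring
      rw [NNReal.coe_one, one_mul]
      calc dist (∫ ω in s, (μ⟦A|m'⟧) ω * (μ[⇑f|m']) ω ∂μ)
            (∫ ω in s, (μ⟦A|m'⟧) ω * (μ[⇑g|m']) ω ∂μ)
          = |∫ ω in s, (μ⟦A|m'⟧) ω * (μ[⇑f|m']) ω ∂μ
              - ∫ ω in s, (μ⟦A|m'⟧) ω * (μ[⇑g|m']) ω ∂μ| := Real.dist_eq _ _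
        _ = |∫ ω in s, ((μ⟦A|m'⟧) ω * (μ[⇑f|m']) ω - (μ⟦A|m'⟧) ω * (μ[⇑g|m']) ω) ∂μ| := by
            rw [integral_sub ((hwint ⇑f).integrableOn) ((hwint ⇑g).integrableOn)]
        _ = |∫ ω in s, (μ⟦A|m'⟧) ω * (μ[⇑f - ⇑g|m']) ω ∂μ| := by
            rw [integral_congr_ae (ae_restrict_of_ae key)]
        _ ≤ ∫ ω in s, |(μ⟦A|m'⟧) ω * (μ[⇑f - ⇑g|m']) ω| ∂μ := by
            simpa only [Real.norm_eq_abs] using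
              norm_integral_le_integral_norm (μ := μ.restrict s)
                (fun ω => (μ⟦A|m'⟧) ω * (μ[⇑f - ⇑g|m']) ω)
        _ ≤ ∫ ω in s, |(μ[⇑f - ⇑g|m']) ω| ∂μ := by
            refine integral_mono_ae ((hwint (⇑f - ⇑g)).abs.integrableOn)
              integrable_condExp.abs.integrableOn (ae_restrict_of_ae ?_)
            filter_upwards [hw] with ω h
            rw [abs_mul]
            exact mul_le_of_le_one_left (abs_nonneg _) h
        _ ≤ ∫ ω, |(μ[⇑f - ⇑g|m']) ω| ∂μ :=
            setIntegral_le_integral integrable_condExp.abs (ae_of_all _ fun ω => abs_nonneg _)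
        _ ≤ ∫ ω, |(⇑f - ⇑g) ω| ∂μ := integral_abs_condExp_le _
        _ = ∫ ω, |f ω - g ω| ∂(μ.trim hm₁) := by
            simp only [Pi.sub_apply]
            exact integral_trim_ae hm₁ hmeas
        _ = dist f g := by
            rw [L1.dist_eq_integral_dist]
            exact integral_congr_ae (ae_of_all _ fun ω => (Real.dist_eq _ _).symm)
  · -- a.e. invariance
    intro f g hfg _hfi hPf
    have hfg' : f =ᵐ[μ] g := ae_eq_of_ae_eq_trim hfg
    have h1 : ∫ ω in s ∩ A, g ω ∂μ = ∫ ω in s ∩ A, f ω ∂μ :=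
      integral_congr_ae (ae_restrict_of_ae hfg'.symm)
    have h2 : ∫ ω in s, (μ⟦A|m'⟧) ω * (μ[g|m']) ω ∂μ
        = ∫ ω in s, (μ⟦A|m'⟧) ω * (μ[f|m']) ω ∂μ := by
      refine integral_congr_ae (ae_restrict_of_ae ?_)
      filter_upwards [condExp_congr_ae (μ := μ) (m := m') hfg'.symm] with ω h
      rw [h]
    rw [h1, h2]; exact hPf

lemma dr_condexp_indicator_mul (hm' : m' ≤ mΩ) (hm₁ : m₁ ≤ mΩ)
    {A : Set Ω} (hA : MeasurableSet A)
    (hprod : ∀ T, MeasurableSet[m₁] T →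
      (μ⟦T ∩ A|m'⟧) =ᵐ[μ] fun ω => (μ⟦T|m'⟧) ω * (μ⟦A|m'⟧) ω)
    {f : Ω → ℝ} (hf : Integrable f μ) (hfm : StronglyMeasurable[m₁] f) :
    μ[A.indicator f|m'] =ᵐ[μ] fun ω => (μ⟦A|m'⟧) ω * (μ[f|m']) ω := by
  have hw := dr_condexp_indicator_abs_le_one (μ := μ) hm' hA
  have hwnorm : ∀ᵐ ω ∂μ, ‖(μ⟦A|m'⟧) ω‖ ≤ 1 := by
    filter_upwards [hw] with ω h using by rwa [Real.norm_eq_abs]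
  refine (ae_eq_condExp_of_forall_setIntegral_eq hm' (hf.indicator hA)
    (fun t _ _ => (Integrable.bdd_mul integrable_condExp
      (stronglyMeasurable_condExp.mono hm').aestronglyMeasurable hwnorm).integrableOn)
    (fun t ht _ => ?_)
    ((stronglyMeasurable_condExp.mul stronglyMeasurable_condExp).aestronglyMeasurable)).symm
  rw [setIntegral_indicator hA]
  exact (dr_aux_setIntegral hm' hm₁ hA hprod ht (hf.trim hm₁ hfm)).symm

end Aux

section Main

variable {Ω : Type*} {m' m₁ : MeasurableSpace Ω} [mΩ : MeasurableSpace Ω]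
  {μ : Measure Ω} [IsProbabilityMeasure μ]

lemma dr_main (hm' : m' ≤ mΩ) (hm₁ : m₁ ≤ mΩ)
    {A : Set Ω} (hA : MeasurableSet A)
    (hprod : ∀ T, MeasurableSet[m₁] T →
      (μ⟦T ∩ A|m'⟧) =ᵐ[μ] fun ω => (μ⟦T|m'⟧) ω * (μ⟦A|m'⟧) ω)
    {φ : Ω → ℝ} (hφm : StronglyMeasurable[m'] φ)
    {Y1 m1 : Ω → ℝ} (hm1 : m1 =ᵐ[μ] μ[Y1|m'])
    (hY1m : StronglyMeasurable[m₁] Y1) (hint1 : Integrable Y1 μ)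
    (hq : Integrable (fun ω => φ ω * A.indicator (fun ω => Y1 ω - m1 ω) ω) μ) :
    ∫ ω, (m1 ω + φ ω * A.indicator (fun ω => Y1 ω - m1 ω) ω) ∂μ = ∫ ω, Y1 ω ∂μ := by
  have hm1int : Integrable m1 μ := integrable_condExp.congr hm1.symm
  have hh : Integrable (fun ω => Y1 ω - m1 ω) μ := hint1.sub hm1int
  have hcruxY1 : μ[A.indicator Y1|m'] =ᵐ[μ] fun ω => (μ⟦A|m'⟧) ω * (μ[Y1|m']) ω :=
    dr_condexp_indicator_mul hm' hm₁ hA hprod hint1 hY1m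
  have hindm1 : μ[A.indicator m1|m'] =ᵐ[μ] fun ω => (μ⟦A|m'⟧) ω * (μ[Y1|m']) ω := by
    have he : A.indicator m1 =ᵐ[μ] fun ω => (μ[Y1|m']) ω * A.indicator (fun _ => (1:ℝ)) ω := by
      filter_upwards [hm1] with ω hω
      classical
      by_cases hmem : ω ∈ A
      · simp [Set.indicator_of_mem hmem, hω]
      · simp [Set.indicator_of_notMem hmem]
    have hmul := condExp_mul_of_stronglyMeasurable_left (m := m')
      (stronglyMeasurable_condExp (f := Y1))
      (Integrable.congr (hm1int.indicator hA) he) ((integrable_const (1:ℝ)).indicator hA)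
    refine ((condExp_congr_ae he).trans ?_)
    refine hmul.trans (ae_of_all _ fun ω => ?_)
    simp only [Pi.mul_apply]
    rw [mul_comm]
  have hzero : μ[A.indicator (fun ω => Y1 ω - m1 ω)|m'] =ᵐ[μ] 0 := by
    have hind_sub : A.indicator (fun ω => Y1 ω - m1 ω)
        = fun ω => A.indicator Y1 ω - A.indicator m1 ω := by
      funext ω; classical
      by_cases hmem : ω ∈ A <;>
        simp [Set.indicator_of_mem, Set.indicator_of_notMem, hmem]
    rw [hind_sub]
    have hsub := condExp_sub (m := m') (hint1.indicator hA) (hm1int.indicator hA)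
    refine (Filter.EventuallyEq.trans ?_ hsub).trans ?_
    · exact condExp_congr_ae (ae_of_all _ fun ω => rfl)
    filter_upwards [hcruxY1, hindm1] with ω h1 h2
    simp [Pi.sub_apply, h1, h2]
  have hcondq : μ[(fun ω => φ ω * A.indicator (fun ω => Y1 ω - m1 ω) ω)|m'] =ᵐ[μ] 0 := by
    have hmul := condExp_mul_of_stronglyMeasurable_left (m := m') hφm hq (hh.indicator hA)
    refine ((condExp_congr_ae (ae_of_all _ fun ω => rfl)).trans (hmul.trans ?_))
    filter_upwards [hzero] with ω h0
    simp only [Pi.mul_apply]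
    rw [h0]
    simp
  have hIq : ∫ ω, φ ω * A.indicator (fun ω => Y1 ω - m1 ω) ω ∂μ = 0 := by
    rw [← integral_condExp hm' (f := fun ω => φ ω * A.indicator (fun ω => Y1 ω - m1 ω) ω),
      integral_congr_ae hcondq]
    simp
  rw [integral_add hm1int hq, hIq, add_zero, integral_congr_ae hm1, integral_condExp hm']

end Main

/-- Doubly-robust identification with a correct outcome regression `m₁(X) = E[Y₁|X]`:
for any measurable `ẽ` of the covariates bounded away from zero,
`E[m₁(X) + Z(Y - m₁(X))/ẽ(X)] = E[Y₁]`. -/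
theorem dr_identification_correct_or
    {Ω : Type*} {mΩ : MeasurableSpace Ω} [StandardBorelSpace Ω]
    {μ : Measure Ω} [IsProbabilityMeasure μ]
    {E : Type*} [mE : MeasurableSpace E]
    (X : Ω → E) (Z Y0 Y1 : Ω → ℝ)
    (hX : Measurable X) (hZ : Measurable Z)
    (hY0 : Measurable Y0) (hY1 : Measurable Y1)
    (hbin : ∀ ω, Z ω = 0 ∨ Z ω = 1)
    (hmX : MeasurableSpace.comap X mE ≤ mΩ)
    (hignore : CondIndepFun (MeasurableSpace.comap X mE) hmX
        (fun ω => (Y0 ω, Y1 ω)) Z μ)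
    (Y : Ω → ℝ) (hY : Y = fun ω => Z ω * Y1 ω + (1 - Z ω) * Y0 ω)
    (m1 : Ω → ℝ) (hm1 : m1 =ᵐ[μ] μ[Y1 | MeasurableSpace.comap X mE])
    (et : E → ℝ) (het : Measurable et) (c : ℝ) (hc : 0 < c)
    (hetlb : ∀ᵐ ω ∂μ, c ≤ et (X ω))
    (hint1 : Integrable Y1 μ)
    (hint : Integrable (fun ω => m1 ω + Z ω * (Y ω - m1 ω) / et (X ω)) μ) :
    ∫ ω, (m1 ω + Z ω * (Y ω - m1 ω) / et (X ω)) ∂μ = ∫ ω, Y1 ω ∂μ := by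
  have hm₁ : MeasurableSpace.comap (fun ω => (Y0 ω, Y1 ω)) inferInstance ≤ mΩ := by
    rintro t ⟨u, hu, rfl⟩
    exact (hY0.prodMk hY1) hu
  have hA : MeasurableSet (Z ⁻¹' {1}) := hZ (measurableSet_singleton 1)
  have hprod : ∀ T, MeasurableSet[MeasurableSpace.comap (fun ω => (Y0 ω, Y1 ω)) inferInstance] T →
      (μ⟦T ∩ Z ⁻¹' {1}|MeasurableSpace.comap X mE⟧) =ᵐ[μ]
        fun ω => (μ⟦T|MeasurableSpace.comap X mE⟧) ω
          * (μ⟦Z ⁻¹' {1}|MeasurableSpace.comap X mE⟧) ω := by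
    rintro T ⟨u, hu, rfl⟩
    exact (condIndepFun_iff_condExp_inter_preimage_eq_mul (hY0.prodMk hY1) hZ).mp hignore u {1}
      hu (measurableSet_singleton 1)
  have hXm' : Measurable[MeasurableSpace.comap X mE] X := fun u hu => ⟨u, hu, rfl⟩
  have hφm : StronglyMeasurable[MeasurableSpace.comap X mE] (fun ω => (et (X ω))⁻¹) :=
    ((het.comp hXm').inv).stronglyMeasurable
  have hpairm : Measurable[MeasurableSpace.comap (fun ω => (Y0 ω, Y1 ω)) inferInstance]
      (fun ω => (Y0 ω, Y1 ω)) := fun u hu => ⟨u, hu, rfl⟩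
  have hY1m : StronglyMeasurable[MeasurableSpace.comap (fun ω => (Y0 ω, Y1 ω)) inferInstance] Y1 :=
    (measurable_snd.comp hpairm).stronglyMeasurable
  have hm1int : Integrable m1 μ := integrable_condExp.congr hm1.symm
  have hh : Integrable (fun ω => Y1 ω - m1 ω) μ := hint1.sub hm1int
  have hpt : ∀ ω, Z ω * (Y ω - m1 ω) / et (X ω)
      = (et (X ω))⁻¹ * (Z ⁻¹' {1}).indicator (fun ω => Y1 ω - m1 ω) ω := by
    intro ω
    rcases hbin ω with h0 | h1
    · have hnm : ω ∉ Z ⁻¹' {1} := by simp [Set.mem_preimage, h0]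
      rw [Set.indicator_of_notMem hnm, h0]
      ring
    · have hmem : ω ∈ Z ⁻¹' {1} := by simp [Set.mem_preimage, h1]
      rw [Set.indicator_of_mem hmem, hY]
      simp only [h1]
      rw [div_eq_mul_inv]
      ring
  have hφb : ∀ᵐ ω ∂μ, ‖(et (X ω))⁻¹‖ ≤ c⁻¹ := by
    filter_upwards [hetlb] with ω hω
    have h1 : 0 < et (X ω) := lt_of_lt_of_le hc hω
    rw [Real.norm_eq_abs, abs_of_pos (inv_pos.mpr h1)]
    exact inv_anti₀ hc hω
  have hq : Integrable
      (fun ω => (et (X ω))⁻¹ * (Z ⁻¹' {1}).indicator (fun ω => Y1 ω - m1 ω) ω) μ :=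
    Integrable.bdd_mul (hh.indicator hA) (hφm.mono hmX).aestronglyMeasurable hφb
  calc ∫ ω, (m1 ω + Z ω * (Y ω - m1 ω) / et (X ω)) ∂μ
      = ∫ ω, (m1 ω + (et (X ω))⁻¹ * (Z ⁻¹' {1}).indicator (fun ω => Y1 ω - m1 ω) ω) ∂μ := by
        refine integral_congr_ae (ae_of_all _ fun ω => ?_)
        simp only []
        rw [hpt ω]
    _ = ∫ ω, Y1 ω ∂μ :=
        dr_main hmX hm₁ hA hprod hφm hm1 hY1m hint1 hq
end
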